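/- With the setup of the random-network model: p_1,...,p_n > 0, z = Σ_k k p_k, β_k > 0, λ_k ∈ (0,1], μ_k ∈ [0,1), β̄ = (1/z)Σ_k k p_k β_k λ_k, and A(i,j) = (1−μ_i)β_i (i p_j λ_i)/(μ_i β_i + z β̄). If μ_i > 0 for at least one index i, then the spectral radius of A is strictly less than 1. -/

import Mathlib

/-- The spectral radius of a real square matrix: the supremum of the moduli of its
complex eigenvalues (roots of the characteristic polynomial over `ℂ`). -/
noncomputable def specRad {n : ℕ} (M : Matrix (Fin n) (Fin n) ℝ) : ℝ :=
  sSup {r : ℝ | ∃ z : ℂ, (Matrix.charpoly (M.map (Complex.ofReal : ℝ → ℂ))).IsRoot z ∧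
    r = ‖z‖}

lemma eval_charpoly_aux {n : ℕ} (M : Matrix (Fin n) (Fin n) ℂ) (x : ℂ) :
    M.charpoly.eval x = (x • (1 : Matrix (Fin n) (Fin n) ℂ) - M).det := by
  rw [Matrix.charpoly, ← Polynomial.coe_evalRingHom, RingHom.map_det]
  congr 1
  ext i j
  by_cases h : i = j
  · subst h
    simp [Matrix.charmatrix_apply_eq, Matrix.one_apply]
  · simp [Matrix.charmatrix_apply_ne _ _ _ h, Matrix.one_apply_ne h]

/-- First moment matrix of the random-network model (Model 2 with
`ε = δ = 0`): if some innovation probability is positive, the spectral radius is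
strictly less than one. Type `i : Fin n` has out-degree `i + 1`. -/
theorem stmt_10 (n : ℕ) (hn : 0 < n) (p β lam μ : Fin n → ℝ)
    (hp : ∀ k, 0 < p k) (hβ : ∀ k, 0 < β k)
    (hlam : ∀ k, lam k ∈ Set.Ioc (0 : ℝ) 1) (hμ : ∀ k, μ k ∈ Set.Ico (0 : ℝ) 1)
    (z βbar : ℝ)
    (hz : z = ∑ k, ((k.1 : ℝ) + 1) * p k)
    (hβbar : βbar = (1 / z) * ∑ k, ((k.1 : ℝ) + 1) * p k * β k * lam k)
    (A : Matrix (Fin n) (Fin n) ℝ)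
    (hA : ∀ i j, A i j =
      (1 - μ i) * β i * ((i.1 : ℝ) + 1) * p j * lam i / (μ i * β i + z * βbar))
    (h0 : ∃ i, 0 < μ i) :
    specRad A < 1 := by
  -- positivity of z and βbar
  have hzpos : 0 < z := by
    rw [hz]
    apply Finset.sum_pos
    · intro k _
      have := hp k
      positivity
    · exact ⟨⟨0, hn⟩, Finset.mem_univ _⟩
  have hSpos : 0 < ∑ k, ((k.1 : ℝ) + 1) * p k * β k * lam k := by
    apply Finset.sum_pos
    · intro k _
      have h1 := hp k
      have h2 := hβ k
      have h3 := (hlam k).1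
      positivity
    · exact ⟨⟨0, hn⟩, Finset.mem_univ _⟩
  have hβbarpos : 0 < βbar := by
    rw [hβbar]; positivity
  have hDpos : 0 < z * βbar := mul_pos hzpos hβbarpos
  have hden : ∀ i, 0 < μ i * β i + z * βbar := fun i =>
    add_pos_of_nonneg_of_pos (mul_nonneg (hμ i).1 (hβ i).le) hDpos
  -- rank-one structure
  set c : Fin n → ℝ := fun i =>
    (1 - μ i) * β i * ((i.1 : ℝ) + 1) * lam i / (μ i * β i + z * βbar) with hc
  have hA' : ∀ i j, A i j = c i * p j := by
    intro i j
    rw [hA, hc]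
    ring
  have hcpos : ∀ i, 0 < c i := by
    intro i
    have h1 := (hμ i).2
    have h2 := hβ i
    have h3 := (hlam i).1
    have h4 := hden i
    have : (0:ℝ) < 1 - μ i := by linarith
    positivity
  set t : ℝ := ∑ k, c k * p k with htdef
  have htpos : 0 < t :=
    Finset.sum_pos (fun k _ => mul_pos (hcpos k) (hp k)) ⟨⟨0, hn⟩, Finset.mem_univ _⟩
  -- t < 1
  have ht1 : t < 1 := by
    have hsum : ∑ k, ((k.1 : ℝ) + 1) * p k * β k * lam k = z * βbar := by
      rw [hβbar]; field_simp
    have hbound : t < ∑ k, ((k.1 : ℝ) + 1) * p k * β k * lam k / (z * βbar) := by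
      obtain ⟨i0, hi0⟩ := h0
      apply Finset.sum_lt_sum
      · intro k _
        simp only [hc]
        rw [div_mul_eq_mul_div, div_le_div_iff₀ (hden k) hDpos]
        have h1 := hp k
        have h2 := hβ k
        have h3 := (hlam k).1
        have h4 := (hμ k).1
        have h5 := (hμ k).2
        have hk : (0:ℝ) ≤ (k.1 : ℝ) + 1 := by positivity
        have ha : (0:ℝ) ≤ ((k.1 : ℝ) + 1) * p k * β k * lam k := by positivity
        nlinarith [mul_nonneg (mul_nonneg h4 ha) (add_nonneg h2.le hDpos.le)]
      · refine ⟨i0, Finset.mem_univ _, ?_⟩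
        simp only [hc]
        rw [div_mul_eq_mul_div, div_lt_div_iff₀ (hden i0) hDpos]
        have h1 := hp i0
        have h2 := hβ i0
        have h3 := (hlam i0).1
        have h5 := (hμ i0).2
        have hk : (0:ℝ) < (i0.1 : ℝ) + 1 := by positivity
        nlinarith [mul_pos (mul_pos (mul_pos hk h1) h2) h3,
          mul_pos hzpos hβbarpos, mul_pos hi0 h2, mul_pos hi0 hDpos]
    calc t < ∑ k, ((k.1 : ℝ) + 1) * p k * β k * lam k / (z * βbar) := hbound
      _ = (∑ k, ((k.1 : ℝ) + 1) * p k * β k * lam k) / (z * βbar) := by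
          rw [Finset.sum_div]
      _ = 1 := by rw [hsum]; field_simp
  -- every characteristic root is 0 or t
  have hroot : ∀ w : ℂ,
      (Matrix.charpoly (A.map (Complex.ofReal : ℝ → ℂ))).IsRoot w →
      w = 0 ∨ w = (t : ℂ) := by
    intro w hw
    have hdet : ((w • (1 : Matrix (Fin n) (Fin n) ℂ)) -
        A.map (Complex.ofReal : ℝ → ℂ)).det = 0 := by
      rw [← eval_charpoly_aux]; exact hw
    obtain ⟨v, hv0, hv⟩ := (Matrix.exists_mulVec_eq_zero_iff).2 hdet
    -- mulVec equation: w * v i = c i * (∑ j, p j * v j)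
    have hMv : (A.map (Complex.ofReal : ℝ → ℂ)).mulVec v = w • v := by
      have h1 : (w • (1 : Matrix (Fin n) (Fin n) ℂ) -
          A.map (Complex.ofReal : ℝ → ℂ)).mulVec v
          = w • v - (A.map (Complex.ofReal : ℝ → ℂ)).mulVec v := by
        rw [Matrix.sub_mulVec, Matrix.smul_mulVec, Matrix.one_mulVec]
      rw [h1, sub_eq_zero] at hv
      exact hv.symm
    have hvec : ∀ i, w * v i = (c i : ℂ) * ∑ j, (p j : ℂ) * v j := by
      intro i
      have hi := congrFun hMv i
      simp only [Matrix.mulVec, dotProduct, Matrix.map_apply,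
        Pi.smul_apply, smul_eq_mul] at hi
      rw [← hi, Finset.mul_sum]
      congr 1
      ext j
      rw [hA' i j]
      push_cast
      ring
    set s : ℂ := ∑ j, (p j : ℂ) * v j with hs
    by_cases hw0 : w = 0
    · left; exact hw0
    · right
      by_cases hs0 : s = 0
      · exfalso
        apply hv0
        ext i
        have := hvec i
        rw [hs0, mul_zero] at this

        exact (mul_eq_zero.1 this).resolve_left hw0
      · -- v i = c i * s / w, so s = (t/w) * s
        have hws : w * s = (t : ℂ) * s := by
          have : w * s = ∑ j, (p j : ℂ) * (w * v j) := by
            rw [hs, Finset.mul_sum]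
            congr 1; ext j; ring
          rw [this]
          have : ∑ j, (p j : ℂ) * (w * v j) = (∑ j, (c j : ℂ) * (p j : ℂ)) * s := by
            rw [Finset.sum_mul]
            congr 1; ext j
            rw [hvec j]; ring
          rw [this]
          congr 1
          rw [htdef]
          push_cast
          ring
        have := mul_right_cancel₀ hs0 hws
        exact this
  -- conclude
  have hub : specRad A ≤ t := by
    apply Real.sSup_le
    · rintro r ⟨w, hw, rfl⟩
      rcases hroot w hw with h | h
      · simp [h]; exact htpos.le
      · rw [h]
        simp [Complex.norm_real, abs_of_pos htpos]
    · exact htpos.le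
  linarith
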